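/- Let (a_n)_{n≥1} be a nonincreasing sequence of positive reals and γ > 0 such that for every N ≥ 1, (2N)^{-γ} ≤ e (a_1 ⋯ a_N)^{1/N}. Then ∑_{n=1}^∞ a_n^{1/γ} = ∞. -/

import Mathlib

open Filter Finset Real

private lemma log_factorial_bound (K : ℕ) :
    (K : ℝ) * Real.log K - K ≤ ∑ k ∈ Finset.Icc 1 K, Real.log k := by
  rcases Nat.eq_zero_or_pos K with hK | hK
  · simp [hK]
  have hKpos : (0:ℝ) < K := by exact_mod_cast hK
  have h0 : ((K:ℝ))^K / (K.factorial : ℝ) ≤ Real.exp K := by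
    refine le_trans ?_ (Real.sum_le_exp_of_nonneg (by positivity) (K+1))
    refine Finset.single_le_sum (f := fun i => (K:ℝ)^i / (i.factorial : ℝ))
      (fun i _ => by positivity) (Finset.self_mem_range_succ K)
  have hfac : (0:ℝ) < (K.factorial : ℝ) := by positivity
  have h1 : ((K:ℝ))^K ≤ Real.exp K * (K.factorial : ℝ) := by
    rw [div_le_iff₀ hfac] at h0; linarith
  have h2 : Real.log ((K:ℝ)^K) ≤ Real.log (Real.exp K * (K.factorial : ℝ)) :=
    Real.log_le_log (by positivity) h1
  rw [Real.log_pow, Real.log_mul (Real.exp_ne_zero _) hfac.ne', Real.log_exp] at h2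
  have h3 : ∑ k ∈ Finset.Icc 1 K, Real.log k = Real.log (K.factorial : ℝ) := by
    rw [← Real.log_prod (fun j hj => by
      have := (Finset.mem_Icc.1 hj).1
      exact_mod_cast Nat.cast_pos.2 (by omega) |>.ne')]
    congr 1
    rw [← Nat.cast_prod]
    congr 1
    rw [← Finset.Ico_add_one_right_eq_Icc]
    exact Finset.prod_Ico_id_eq_factorial K
  linarith

/-- From the multiplicative Weyl-type hypothesis `(2N)^{-γ} ≤ e (a_1 ⋯ a_N)^{1/N}`
for a nonincreasing sequence of positive reals, the series `∑ a_n^{1/γ}` diverges. -/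
theorem not_summable_from_weyl
    (a : ℕ → ℝ) (γ : ℝ) (hγ : 0 < γ)
    (hpos : ∀ n, 1 ≤ n → 0 < a n)
    (hmono : ∀ m n, 1 ≤ m → m ≤ n → a n ≤ a m)
    (hweyl : ∀ N : ℕ, 1 ≤ N →
      (2 * (N : ℝ)) ^ (-γ) ≤ Real.exp 1 * (∏ j ∈ Finset.Icc 1 N, a j) ^ ((1 : ℝ) / N)) :
    ¬ Summable (fun n : ℕ => a (n + 1) ^ ((1 : ℝ) / γ)) := by
  intro h
  set f : ℕ → ℝ := fun n : ℕ => a (n + 1) ^ ((1 : ℝ) / γ) with hf_def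
  have hfpos : ∀ n, 0 < f n := fun n =>
    Real.rpow_pos_of_pos (hpos _ (Nat.le_add_left 1 n)) _
  have hfmono : ∀ m n : ℕ, m ≤ n → f n ≤ f m := by
    intro m n hmn
    exact Real.rpow_le_rpow (hpos _ (Nat.le_add_left 1 n)).le
      (hmono (m+1) (n+1) (Nat.le_add_left 1 m) (by omega)) (by positivity)
  set ε : ℝ := Real.exp (-(γ * Real.log 2 + γ + 2)/γ) with hε_def
  have hεpos : 0 < ε := Real.exp_pos _
  have hlogε : γ * Real.log ε = -(γ * Real.log 2 + γ + 2) := by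
    rw [hε_def, Real.log_exp]
    field_simp
  obtain ⟨M, hM⟩ : ∃ M, ∑' k, f (k + M) < ε :=
    ((tendsto_order.1 (tendsto_sum_nat_add f)).2 ε hεpos).exists
  set C : ℝ := ∑ j ∈ Finset.Icc 1 M, Real.log (a j) with hC_def
  -- pointwise bound from summability
  have hkey : ∀ k : ℕ, 1 ≤ k → Real.log (a (M + k)) ≤ γ * (Real.log ε - Real.log k) := by
    intro k hk
    set n := M + k - 1 with hn
    have hn1 : n + 1 = M + k := by omega
    have hkpos : (0:ℝ) < k := by exact_mod_cast hk
    have hfb : (k:ℝ) * f n ≤ ε := by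
      have hsum : ∑ _i ∈ Finset.range k, f n ≤ ∑ i ∈ Finset.range k, f (i + M) := by
        refine Finset.sum_le_sum fun i hi => hfmono (i+M) n ?_
        simp only [Finset.mem_range] at hi
        omega
      have hts : ∑ i ∈ Finset.range k, f (i + M) ≤ ∑' i, f (i + M) :=
        Summable.sum_le_tsum _ (fun i _ => (hfpos _).le) ((summable_nat_add_iff M).2 h)
      have hcst : ∑ _i ∈ Finset.range k, f n = (k:ℝ) * f n := by
        simp [Finset.sum_const, nsmul_eq_mul]
      linarith
    have hfb' : f n ≤ ε / k := by
      rw [le_div_iff₀ hkpos]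
      linarith
    have hlf : Real.log (f n) ≤ Real.log ε - Real.log k :=
      le_trans (Real.log_le_log (hfpos n) hfb')
        (le_of_eq (Real.log_div hεpos.ne' hkpos.ne'))
    have ha_eq : a (M + k) = f n ^ γ := by
      rw [hf_def]
      simp only
      rw [← Real.rpow_mul (hpos (n+1) (by omega)).le, one_div_mul_cancel hγ.ne',
        Real.rpow_one, hn1]
    rw [ha_eq, Real.log_rpow (hfpos n)]
    have := mul_le_mul_of_nonneg_left hlf hγ.le
    linarith
  -- log form of the Weyl hypothesis
  have hlw : ∀ N : ℕ, 1 ≤ N → -(γ * (Real.log 2 + Real.log N)) ≤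
      1 + (∑ j ∈ Finset.Icc 1 N, Real.log (a j)) / N := by
    intro N hN
    have hNpos : (0:ℝ) < N := by exact_mod_cast hN
    have hPpos : 0 < ∏ j ∈ Finset.Icc 1 N, a j :=
      Finset.prod_pos fun j hj => hpos j (Finset.mem_Icc.1 hj).1
    have h2N : (0:ℝ) < 2 * N := by linarith
    have hlog := Real.log_le_log (Real.rpow_pos_of_pos h2N _) (hweyl N hN)
    rw [Real.log_rpow h2N, Real.log_mul (Real.exp_ne_zero 1)
        (Real.rpow_pos_of_pos hPpos _).ne', Real.log_exp, Real.log_rpow hPpos,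
      Real.log_prod (fun j hj => (hpos j (Finset.mem_Icc.1 hj).1).ne')] at hlog
    have e1 : Real.log (2 * (N:ℝ)) = Real.log 2 + Real.log N :=
      Real.log_mul two_ne_zero hNpos.ne'
    have e2 : 1/(N:ℝ) * ∑ j ∈ Finset.Icc 1 N, Real.log (a j)
        = (∑ j ∈ Finset.Icc 1 N, Real.log (a j)) / N := one_div_mul_eq_div _ _
    rw [e1] at hlog
    linarith
  -- sum splitting
  have hsplit : ∀ K : ℕ, ∑ j ∈ Finset.Icc 1 (M + K), Real.log (a j)
      = C + ∑ k ∈ Finset.Icc 1 K, Real.log (a (M + k)) := by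
    intro K
    have e1 : ∑ j ∈ Finset.Icc 1 (M + K), Real.log (a j)
        = ∑ j ∈ Finset.Ico 1 (M + 1), Real.log (a j)
          + ∑ j ∈ Finset.Ico (M + 1) (M + K + 1), Real.log (a j) := by
      rw [Finset.sum_Ico_consecutive _ (by omega) (by omega), Finset.Ico_add_one_right_eq_Icc]
    have e2 : ∑ j ∈ Finset.Ico 1 (M + 1), Real.log (a j) = C := by
      rw [Finset.Ico_add_one_right_eq_Icc]
    have e3 : ∑ j ∈ Finset.Ico (M + 1) (M + K + 1), Real.log (a j)
        = ∑ i ∈ Finset.range K, Real.log (a (M + 1 + i)) := by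
      rw [Finset.sum_Ico_eq_sum_range, show M + K + 1 - (M + 1) = K from by omega]
    have e4 : ∑ k ∈ Finset.Icc 1 K, Real.log (a (M + k))
        = ∑ i ∈ Finset.range K, Real.log (a (M + 1 + i)) := by
      rw [← Finset.Ico_add_one_right_eq_Icc, Finset.sum_Ico_eq_sum_range,
        show K + 1 - 1 = K from by omega]
      exact Finset.sum_congr rfl fun i _ => by rw [show M + (1 + i) = M + 1 + i from by omega]
    rw [e1, e2, e3, ← e4]
  -- real-variable function and its limit
  set m : ℝ := (M : ℝ) with hm_def
  have hmnn : 0 ≤ m := Nat.cast_nonneg M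
  set G : ℝ → ℝ := fun x => 1 + γ * Real.log 2 + γ * Real.log (m + x)
      + (C + γ * (x * Real.log ε) - γ * (x * Real.log x - x)) / (m + x) with hG_def
  -- the eventual inequality
  have hg : ∀ᶠ K : ℕ in atTop, 0 ≤ G (K : ℝ) := by
    filter_upwards [eventually_ge_atTop 1] with K hK
    have hNK : 1 ≤ M + K := by omega
    have hKpos : (0:ℝ) < K := by exact_mod_cast hK
    have hNpos : (0:ℝ) < m + K := by linarith
    have hw := hlw (M + K) hNK
    have hS2 : ∑ k ∈ Finset.Icc 1 K, Real.log (a (M + k))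
        ≤ γ * ((K:ℝ) * Real.log ε - ∑ k ∈ Finset.Icc 1 K, Real.log k) := by
      have := Finset.sum_le_sum (s := Finset.Icc 1 K)
        (f := fun k : ℕ => Real.log (a (M + k)))
        (g := fun k : ℕ => γ * (Real.log ε - Real.log k))
        (fun k hk => hkey k (Finset.mem_Icc.1 hk).1)
      refine le_trans this (le_of_eq ?_)
      rw [← Finset.mul_sum, Finset.sum_sub_distrib, Finset.sum_const, Nat.card_Icc]
      simp
    have hT := log_factorial_bound K
    have hS : ∑ j ∈ Finset.Icc 1 (M + K), Real.log (a j)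
        ≤ C + γ * ((K:ℝ) * Real.log ε) - γ * ((K:ℝ) * Real.log K - K) := by
      rw [hsplit K]
      have h4 : γ * ((K:ℝ) * Real.log ε - ∑ k ∈ Finset.Icc 1 K, Real.log k)
          ≤ γ * ((K:ℝ) * Real.log ε) - γ * ((K:ℝ) * Real.log K - K) := by
        have := mul_le_mul_of_nonneg_left hT hγ.le
        ring_nf
        ring_nf at this
        linarith
      linarith
    have hdiv : (∑ j ∈ Finset.Icc 1 (M + K), Real.log (a j)) / ((M + K : ℕ) : ℝ)
        ≤ (C + γ * ((K:ℝ) * Real.log ε) - γ * ((K:ℝ) * Real.log K - K)) / (m + K) := by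
      have hcast : ((M + K : ℕ) : ℝ) = m + K := by push_cast; ring
      rw [hcast]
      gcongr
    have hcast2 : Real.log ((M + K : ℕ) : ℝ) = Real.log (m + K) := by
      congr 1
      push_cast
      ring
    rw [hcast2] at hw
    simp only [hG_def]
    nlinarith [hw, hdiv, hγ.le]
  -- the limit of G is -1
  have l0 : Tendsto (fun x : ℝ => m + x) atTop atTop :=
    tendsto_atTop_add_const_left _ m tendsto_id
  have lc : ∀ c : ℝ, Tendsto (fun x : ℝ => c / (m + x)) atTop (nhds 0) :=
    fun c => Tendsto.div_atTop tendsto_const_nhds l0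
  have l1 : Tendsto (fun x : ℝ => x / (m + x)) atTop (nhds 1) := by
    have h1 : Tendsto (fun x : ℝ => 1 - m / (m + x)) atTop (nhds (1 - 0)) :=
      tendsto_const_nhds.sub (lc m)
    rw [sub_zero] at h1
    refine h1.congr' ?_
    filter_upwards [eventually_gt_atTop 0] with x hx
    have hmx : m + x ≠ 0 := by positivity
    field_simp; ring
  have l3 : Tendsto (fun x : ℝ => Real.log (m + x) - Real.log x) atTop (nhds 0) := by
    have lq : Tendsto (fun x : ℝ => 1 + m / x) atTop (nhds 1) := by
      have := tendsto_const_nhds (α := ℝ) (x := (1:ℝ)) (f := atTop) |>.add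
        (Tendsto.div_atTop (tendsto_const_nhds (x := m)) tendsto_id)
      simpa using this
    have hcomp := (Real.continuousAt_log one_ne_zero).tendsto.comp lq
    rw [Real.log_one] at hcomp
    refine hcomp.congr' ?_
    filter_upwards [eventually_gt_atTop 0] with x hx
    have hx' : x ≠ 0 := hx.ne'
    have hmx : m + x ≠ 0 := by positivity
    simp only [Function.comp_apply]
    rw [show (1 : ℝ) + m / x = (m + x) / x by field_simp; ring,
      Real.log_div hmx hx']
  have l4 : Tendsto (fun x : ℝ => Real.log x / (m + x)) atTop (nhds 0) := by
    have hll : Tendsto (fun x : ℝ => Real.log x / x) atTop (nhds 0) :=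
      Real.isLittleO_log_id_atTop.tendsto_div_nhds_zero
    have := hll.mul l1
    rw [zero_mul] at this
    refine this.congr' ?_
    filter_upwards [eventually_gt_atTop 0] with x hx
    have hx' : x ≠ 0 := hx.ne'
    have hmx : m + x ≠ 0 := by positivity
    field_simp
  have hH : Tendsto (fun x : ℝ =>
      (1 + γ * Real.log 2) + γ * Real.log ε * (x / (m + x)) + γ * (x / (m + x))
        + C / (m + x)
        + γ * ((Real.log (m + x) - Real.log x) + m * (Real.log x / (m + x))))
      atTop (nhds ((1 + γ * Real.log 2) + γ * Real.log ε * 1 + γ * 1 + 0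
        + γ * (0 + m * 0))) := by
    exact ((((tendsto_const_nhds.add ((tendsto_const_nhds.mul l1))).add
      (tendsto_const_nhds.mul l1)).add (lc C)).add
      (tendsto_const_nhds.mul (l3.add (tendsto_const_nhds.mul l4))))
  have hval : (1 + γ * Real.log 2) + γ * Real.log ε * 1 + γ * 1 + 0 + γ * (0 + m * 0)
      = -1 := by
    have := hlogε
    nlinarith [hlogε]
  rw [hval] at hH
  have hGt : Tendsto G atTop (nhds (-1)) := by
    refine hH.congr' ?_
    filter_upwards [eventually_gt_atTop 0] with x hx
    have hx' : x ≠ 0 := hx.ne'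
    have hmx : (0:ℝ) < m + x := by linarith
    simp only [hG_def]
    field_simp
    ring
  have hfinal : (0:ℝ) ≤ -1 :=
    ge_of_tendsto (hGt.comp tendsto_natCast_atTop_atTop) hg
  linarith
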